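/- Let $f : \mathbb{D} \to \mathbb{D}$ be analytic and suppose $f$ extends holomorphically across an open arc $I$ of $\partial\mathbb{D}$ with $f(I) \subset \partial\mathbb{D}$. Then for every $\zeta \in I$, $\lim_{z\to\zeta,\, z\in\mathbb{D}} (1-|z|^2)\frac{|f'(z)|}{1-|f(z)|^2} = 1$. -/

import Mathlib

set_option maxHeartbeats 1000000

open Metric Set Filter
open scoped Real

noncomputable def Complex.abs : AbsoluteValue ℂ ℝ := NormedField.toAbsoluteValue ℂ

lemma Complex.abs_def (z : ℂ) : Complex.abs z = ‖z‖ := rfl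

lemma Complex.norm_eq_abs (z : ℂ) : ‖z‖ = Complex.abs z := rfl

lemma Complex.sq_abs (z : ℂ) : Complex.abs z ^ 2 = Complex.normSq z := Complex.sq_norm z

lemma Complex.abs_ofReal (r : ℝ) : Complex.abs (r : ℂ) = |r| := Complex.norm_real r

lemma Complex.abs_conj (z : ℂ) : Complex.abs ((starRingEnd ℂ) z) = Complex.abs z := Complex.norm_conj z

lemma Complex.abs_exp_ofReal_mul_I (x : ℝ) : Complex.abs (Complex.exp (x * Complex.I)) = 1 :=
  Complex.norm_exp_ofReal_mul_I x

lemma Complex.abs_mul_exp_arg_mul_I (x : ℂ) :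
    ↑(Complex.abs x) * Complex.exp (Complex.arg x * Complex.I) = x :=
  Complex.norm_mul_exp_arg_mul_I x

lemma Complex.continuous_abs : Continuous (fun z : ℂ => Complex.abs z) := continuous_norm

lemma refl_diff {F : ℂ → ℂ} {z : ℂ} (h : DifferentiableAt ℂ F ((starRingEnd ℂ) z)) :
    HasDerivAt (fun w => (starRingEnd ℂ) (F ((starRingEnd ℂ) w)))
      ((starRingEnd ℂ) (deriv F ((starRingEnd ℂ) z))) z := by
  have hd : HasDerivAt F (deriv F ((starRingEnd ℂ) z)) ((starRingEnd ℂ) z) := h.hasDerivAt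
  rw [hasDerivAt_iff_tendsto_slope] at hd ⊢
  have hconj : Tendsto (fun w : ℂ => (starRingEnd ℂ) w) (nhdsWithin z {z}ᶜ)
      (nhdsWithin ((starRingEnd ℂ) z) {(starRingEnd ℂ) z}ᶜ) := by
    apply Filter.Tendsto.inf (Complex.continuous_conj.tendsto z)
    rw [Filter.tendsto_principal]
    rw [Filter.eventually_principal]
    intro w hw hc
    exact hw (by simpa using congrArg (starRingEnd ℂ) hc)
  have key : ∀ w : ℂ, w ≠ z → slope (fun w => (starRingEnd ℂ) (F ((starRingEnd ℂ) w))) z w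
      = (starRingEnd ℂ) (slope F ((starRingEnd ℂ) z) ((starRingEnd ℂ) w)) := by
    intro w hw
    simp only [slope_def_field]
    rw [map_div₀, map_sub]; simp
  have : Tendsto (fun w => (starRingEnd ℂ) (slope F ((starRingEnd ℂ) z) ((starRingEnd ℂ) w)))
      (nhdsWithin z {z}ᶜ) (nhds ((starRingEnd ℂ) (deriv F ((starRingEnd ℂ) z)))) :=
    (Complex.continuous_conj.tendsto _).comp (hd.comp hconj)
  apply this.congr'
  filter_upwards [self_mem_nhdsWithin] with w hw
  exact (key w hw).symm

lemma exists_theta (n : ℕ) (hn : 2 ≤ n) (β : ℝ) (hβ₁ : -π < β) (hβ₂ : β ≤ π) :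
    ∃ θ : ℝ, |θ| ≤ π / 3 ∧ 1/2 ≤ Real.cos (β + n * θ) := by
  have hπ := Real.pi_pos
  have hn' : (2:ℝ) ≤ (n:ℝ) := by exact_mod_cast hn
  have hnp : (0:ℝ) < (n:ℝ) := by linarith
  have h2 : 2*(π/3) ≤ (n:ℝ)*(π/3) := by nlinarith
  by_cases h : |β| ≤ n * (π/3)
  · refine ⟨-β / n, ?_, ?_⟩
    · rw [abs_div, abs_neg, abs_of_nonneg hnp.le, div_le_iff₀ hnp]
      linarith [h]
    · have : β + n * (-β / n) = 0 := by field_simp; ring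
      rw [this, Real.cos_zero]; norm_num
  · push_neg at h
    rcases le_or_gt 0 β with hb | hb
    · have hβ' : (n:ℝ) * (π/3) < β := by rwa [abs_of_nonneg hb] at h
      refine ⟨(π/3 - β) / n, ?_, ?_⟩
      · rw [abs_div, abs_of_nonneg hnp.le, div_le_iff₀ hnp, abs_le]
        constructor <;> nlinarith
      · have : β + n * ((π/3 - β) / n) = π/3 := by field_simp; ring
        rw [this, Real.cos_pi_div_three]
    · have hβ' : (n:ℝ) * (π/3) < -β := by rwa [abs_of_nonpos hb.le] at h
      refine ⟨(-(π/3) - β) / n, ?_, ?_⟩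
      · rw [abs_div, abs_of_nonneg hnp.le, div_le_iff₀ hnp, abs_le]
        constructor <;> nlinarith
      · have : β + n * ((-(π/3) - β) / n) = -(π/3) := by field_simp; ring
        rw [this, Real.cos_neg, Real.cos_pi_div_three]

lemma re_mul_exp (a : ℂ) (s : ℝ) :
    (a * Complex.exp (↑s * Complex.I)).re = Complex.abs a * Real.cos (Complex.arg a + s) := by
  conv_lhs => rw [← Complex.abs_mul_exp_arg_mul_I a]
  rw [mul_assoc, ← Complex.exp_add]
  have : (↑(Complex.arg a) * Complex.I + ↑s * Complex.I) = ↑(Complex.arg a + s) * Complex.I := by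
    push_cast; ring
  rw [this, Complex.re_ofReal_mul, Complex.exp_ofReal_mul_I_re]

lemma aux_r0 (F : ℂ → ℂ) (U : Set ℂ) (ζ : ℂ) (hU : IsOpen U) (hζU : ζ ∈ U)
    (hζabs : Complex.abs ζ = 1) (hζne : ζ ≠ 0) :
    ∃ r₀ > 0, ball ζ r₀ ⊆ U ∧
        ∀ z ∈ ball ζ r₀, z ≠ 0 ∧ ((starRingEnd ℂ) z)⁻¹ ∈ U := by
  have hmc : ζ * (starRingEnd ℂ) ζ = 1 := by
    rw [Complex.mul_conj]
    norm_cast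
    rw [← Complex.sq_abs, hζabs]; norm_num
  have hτζ : ((starRingEnd ℂ) ζ)⁻¹ = ζ := inv_eq_of_mul_eq_one_left hmc
  have hcont : ContinuousAt (fun z : ℂ => ((starRingEnd ℂ) z)⁻¹) ζ := by
    apply ContinuousAt.inv₀ (Complex.continuous_conj.continuousAt)
    simpa using hζne
  have hW : (U ∩ {(0:ℂ)}ᶜ ∩ (fun z : ℂ => ((starRingEnd ℂ) z)⁻¹) ⁻¹' U) ∈ nhds ζ := by
    refine Filter.inter_mem (Filter.inter_mem (hU.mem_nhds hζU) ?_)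
      (hcont.preimage_mem_nhds (hU.mem_nhds (by rwa [hτζ])))
    exact (isOpen_compl_singleton).mem_nhds hζne
  obtain ⟨r₀, hr₀pos, hr₀sub⟩ := Metric.mem_nhds_iff.mp hW
  exact ⟨r₀, hr₀pos, fun z hz => (hr₀sub hz).1.1,
    fun z hz => ⟨(hr₀sub hz).1.2, (hr₀sub hz).2⟩⟩

lemma aux_hid (F : ℂ → ℂ) (I U V : Set ℂ) (ζ : ℂ) (hU : IsOpen U) (hζU : ζ ∈ U)
    (hVopen : IsOpen V) (hIV : I = V ∩ sphere (0:ℂ) 1)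
    (hI : I ⊆ sphere (0:ℂ) 1) (hζ : ζ ∈ I)
    (hF : DifferentiableOn ℂ F U)
    (hFan : AnalyticOnNhd ℂ F U)
    (hmod : ∀ ζ ∈ I, Complex.abs (F ζ) = 1)
    (hζabs : Complex.abs ζ = 1) (hζne : ζ ≠ 0)
    (r₀ : ℝ) (hr₀pos : 0 < r₀) (hr₀U : ball ζ r₀ ⊆ U)
    (hr₀good : ∀ z ∈ ball ζ r₀, z ≠ 0 ∧ ((starRingEnd ℂ) z)⁻¹ ∈ U) :
    ∀ z ∈ ball ζ r₀,
      F z * (starRingEnd ℂ) (F (((starRingEnd ℂ) z)⁻¹)) = 1 := by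
  set Φ : ℂ → ℂ := fun w => (starRingEnd ℂ) (F ((starRingEnd ℂ) w)) with hΦ
  set H : ℂ → ℂ := fun z => F z * Φ (z⁻¹) - 1 with hH
  -- Φ is analytic on the reflected domain
  have hΦan : AnalyticOnNhd ℂ Φ ((starRingEnd ℂ) ⁻¹' U) := by
    apply DifferentiableOn.analyticOnNhd
    · intro w hw
      exact (refl_diff (hF.differentiableAt (hU.mem_nhds hw))).differentiableAt.differentiableWithinAt
    · exact hU.preimage Complex.continuous_conj
  have hHan : AnalyticOnNhd ℂ H (ball ζ r₀) := by
    intro z hz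
    obtain ⟨hzne, hzU⟩ := hr₀good z hz
    have h1 : AnalyticAt ℂ F z := hFan z (hr₀U hz)
    have h2 : AnalyticAt ℂ (fun z : ℂ => Φ (z⁻¹)) z := by
      have hinv : AnalyticAt ℂ (Inv.inv : ℂ → ℂ) z := analyticAt_inv hzne
      have hmem : (starRingEnd ℂ) (z⁻¹) ∈ U := by rwa [map_inv₀]
      exact (hΦan _ hmem).comp hinv
    exact (h1.mul h2).sub analyticAt_const
  -- frequent vanishing along a sequence inside I
  have hfreq : ∃ᶠ z in nhdsWithin ζ {ζ}ᶜ, H z = 0 := by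
    set t : ℕ → ℝ := fun n => ((n:ℝ)+1)⁻¹ with ht
    set u : ℕ → ℂ := fun n => ζ * Complex.exp (((t n : ℝ) : ℂ) * Complex.I) with hu
    have htend0 : Tendsto t atTop (nhds 0) := by
      have := tendsto_one_div_add_atTop_nhds_zero_nat (𝕜 := ℝ)
      simpa [ht, one_div] using this
    have htendu : Tendsto u atTop (nhds ζ) := by
      have h1 : Tendsto (fun n => ((t n : ℝ) : ℂ)) atTop (nhds 0) := by
        simpa [Function.comp_def] using (Complex.continuous_ofReal.tendsto 0).comp htend0
      have h2 : Tendsto (fun n => ((t n : ℝ) : ℂ) * Complex.I) atTop (nhds 0) := by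
        simpa using h1.mul_const Complex.I
      have h3 := (Complex.continuous_exp.tendsto 0).comp h2
      have h4 : Tendsto u atTop (nhds (ζ * 1)) := by
        apply Tendsto.const_mul
        simpa [Complex.exp_zero, Function.comp_def] using h3
      simpa using h4
    have htpos : ∀ n : ℕ, 0 < t n := by intro n; rw [ht]; positivity
    have htle : ∀ n : ℕ, t n ≤ 1 := by
      intro n
      rw [ht]
      simp only []
      rw [inv_le_one_iff₀]
      right
      linarith [Nat.cast_nonneg (α := ℝ) n]
    have huν : ∀ n : ℕ, u n ≠ ζ := by
      intro n h
      have h1 : Complex.exp (((t n : ℝ) : ℂ) * Complex.I) = 1 :=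
        mul_left_cancel₀ hζne (show ζ * Complex.exp (((t n : ℝ) : ℂ) * Complex.I) = ζ * 1 by rw [mul_one]; exact h)
      rw [Complex.exp_eq_one_iff] at h1
      obtain ⟨k, hk⟩ := h1
      have him : t n = (k:ℝ) * (2 * π) := by
        have := congrArg Complex.im hk
        simpa using this
      have hπ := Real.pi_gt_three
      have h2 := htpos n
      have h3 := htle n
      rcases le_or_gt (k:ℝ) 0 with hk0 | hk0
      · nlinarith
      · have : (1:ℝ) ≤ (k:ℝ) := by exact_mod_cast (by exact_mod_cast hk0 : (0:ℤ) < k)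
        nlinarith
    have habs : ∀ n : ℕ, Complex.abs (u n) = 1 := by
      intro n
      rw [hu]
      simp only []
      rw [map_mul, Complex.abs_exp_ofReal_mul_I, hζabs, mul_one]
    have hmemI : ∀ᶠ n in atTop, u n ∈ I := by
      have hVb : V ∩ ball ζ r₀ ∈ nhds ζ :=
        Filter.inter_mem (hVopen.mem_nhds (by rw [hIV] at hζ; exact hζ.1))
          (ball_mem_nhds ζ hr₀pos)
      filter_upwards [htendu.eventually_mem hVb] with n hn
      rw [hIV]
      exact ⟨hn.1, by simpa [Complex.abs_def] using habs n⟩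
    have hHu : ∀ᶠ n in atTop, H (u n) = 0 := by
      filter_upwards [hmemI] with n hn
      have habs1 := habs n
      have hmc : u n * (starRingEnd ℂ) (u n) = 1 := by
        rw [Complex.mul_conj]
        norm_cast
        rw [← Complex.sq_abs, habs1]; norm_num
      have hτ : ((starRingEnd ℂ) (u n))⁻¹ = u n := inv_eq_of_mul_eq_one_left hmc
      have hΦu : Φ ((u n)⁻¹) = (starRingEnd ℂ) (F (u n)) := by
        rw [hΦ]
        simp only [map_inv₀]
        rw [hτ]
      rw [hH]
      simp only [hΦu]
      rw [Complex.mul_conj]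
      norm_cast
      rw [← Complex.sq_abs, hmod _ hn]
      norm_num
    have htendu' : Tendsto u atTop (nhdsWithin ζ {ζ}ᶜ) := by
      apply tendsto_nhdsWithin_of_tendsto_nhds_of_eventually_within _ htendu
      filter_upwards [] with n
      exact huν n
    exact htendu'.frequently hHu.frequently
  have hEq := hHan.eqOn_zero_of_preconnected_of_frequently_eq_zero
    (convex_ball ζ r₀).isPreconnected (mem_ball_self hr₀pos) hfreq
  intro z hz
  have := hEq hz
  rw [hH] at this
  simp only [Pi.zero_apply, sub_eq_zero] at this
  rw [hΦ] at this
  simp only [map_inv₀] at this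
  -- this : F z * conj (F ((conj z)⁻¹)) = 1  (after rewriting conj (z⁻¹))
  exact this

lemma aux_hstar (F : ℂ → ℂ) (ζ : ℂ) (r₀ : ℝ)
    (hFlt : ∀ z ∈ ball (0:ℂ) 1, Complex.abs (F z) < 1)
    (hid : ∀ z ∈ ball ζ r₀, F z * (starRingEnd ℂ) (F (((starRingEnd ℂ) z)⁻¹)) = 1) :
    ∀ z ∈ ball ζ r₀ ∩ ball (0:ℂ) 1,
      1 - Complex.abs (F z) ^ 2
        = Complex.abs (F z) * Complex.abs (F (((starRingEnd ℂ) z)⁻¹) - F z) := by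
  intro z hz
  have h1 : F z * (starRingEnd ℂ) (F (((starRingEnd ℂ) z)⁻¹) - F z)
      = 1 - F z * (starRingEnd ℂ) (F z) := by
    rw [map_sub, mul_sub, hid z hz.1]
  have h2 : (1:ℂ) - F z * (starRingEnd ℂ) (F z) = ((1 - Complex.abs (F z)^2 : ℝ) : ℂ) := by
    rw [Complex.mul_conj, ← Complex.sq_abs]
    push_cast
    ring
  have h3 := congrArg Complex.abs h1
  rw [map_mul, h2, Complex.abs_ofReal, Complex.abs_conj, abs_of_nonneg (by nlinarith [hFlt z hz.2, Complex.abs.nonneg (F z)])] at h3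
  linarith [h3]

lemma aux_hzstar : ∀ z : ℂ, z ∈ ball (0:ℂ) 1 → z ≠ 0 →
    1 - Complex.abs z ^ 2
      = Complex.abs z * Complex.abs (((starRingEnd ℂ) z)⁻¹ - z) := by
  intro z hz hzne
  have hcne : (starRingEnd ℂ) z ≠ 0 := by simpa using hzne
  have h1 : (starRingEnd ℂ) z * (((starRingEnd ℂ) z)⁻¹ - z) = 1 - (starRingEnd ℂ) z * z := by
    field_simp
  have h2 : (1:ℂ) - (starRingEnd ℂ) z * z = ((1 - Complex.abs z^2 : ℝ) : ℂ) := by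
    rw [mul_comm, Complex.mul_conj, ← Complex.sq_abs]
    push_cast
    ring
  have hlt : Complex.abs z < 1 := by simpa [Complex.abs_def] using hz
  have h3 := congrArg Complex.abs h1
  rw [map_mul, h2, Complex.abs_ofReal, Complex.abs_conj,
    abs_of_nonneg (by nlinarith [Complex.abs.nonneg z])] at h3
  linarith [h3]

lemma aux_hd0 (F : ℂ → ℂ) (U : Set ℂ) (ζ : ℂ) (hU : IsOpen U) (hζU : ζ ∈ U)
    (hFan : AnalyticOnNhd ℂ F U)
    (hw₀ : Complex.abs (F ζ) = 1) (hw₀ne : F ζ ≠ 0)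
    (hζabs : Complex.abs ζ = 1) (hζne : ζ ≠ 0)
    (hFlt : ∀ z ∈ ball (0:ℂ) 1, Complex.abs (F z) < 1) :
    deriv F ζ ≠ 0 := by
  intro hd0
  set p : ℂ → ℂ := fun z => F z - F ζ with hp
  have hpan : AnalyticAt ℂ p ζ := (hFan ζ hζU).sub analyticAt_const
  -- the point ζ(1-s) is in the unit ball and close to ζ
  have hpoint : ∀ s : ℝ, 0 < s → s ≤ 1/2 → ζ * (1 - (s:ℂ)) ∈ ball (0:ℂ) 1 ∧
      dist (ζ * (1 - (s:ℂ))) ζ = s := by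
    intro s hs hs2
    constructor
    · rw [mem_ball_zero_iff]
      have : ‖ζ * (1 - (s:ℂ))‖ = Complex.abs ζ * Complex.abs (1 - (s:ℂ)) := by
        simp [Complex.abs_def]
      rw [this, hζabs, one_mul]
      have : (1 : ℂ) - (s:ℂ) = ((1 - s : ℝ) : ℂ) := by push_cast; ring
      rw [this, Complex.abs_ofReal, abs_of_nonneg (by linarith)]
      linarith
    · rw [dist_eq_norm]
      have : ζ * (1 - (s:ℂ)) - ζ = -(ζ * s) := by ring
      rw [this, norm_neg, Complex.norm_eq_abs, map_mul, hζabs, one_mul,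
        Complex.abs_ofReal, abs_of_pos hs]
  -- p is not eventually zero
  have hne : ¬ ∀ᶠ z in nhds ζ, p z = 0 := by
    intro h
    obtain ⟨ε, hε, hsub⟩ := Metric.eventually_nhds_iff_ball.mp h
    set s := min (ε/2) (1/2) with hs
    have hs0 : 0 < s := by positivity
    have hs2 : s ≤ 1/2 := min_le_right _ _
    obtain ⟨hmem, hdist⟩ := hpoint s hs0 hs2
    have hball : ζ * (1 - (s:ℂ)) ∈ ball ζ ε := by
      rw [mem_ball, hdist]
      calc s ≤ ε/2 := min_le_left _ _
        _ < ε := by linarith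
    have := hsub _ hball
    rw [hp] at this
    simp only [sub_eq_zero] at this
    have h1 := hFlt _ hmem
    rw [this, hw₀] at h1
    exact absurd h1 (lt_irrefl 1)
  -- finite order
  have htop : analyticOrderAt p ζ ≠ ⊤ := fun h => hne (analyticOrderAt_eq_top.mp h)
  obtain ⟨n, hn⟩ := ENat.ne_top_iff_exists.mp htop
  obtain ⟨g, hgan, hgne, hev⟩ := (hpan.analyticOrderAt_eq_natCast (n := n)).mp hn.symm
  -- n ≥ 2
  have hn2 : 2 ≤ n := by
    by_contra hlt
    push_neg at hlt
    interval_cases n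
    · have := hev.self_of_nhds
      simp [hp] at this
      exact hgne this.symm
    · have hgd : HasDerivAt (fun z => (z - ζ)^1 • g z) (g ζ) ζ := by
        have h1 : HasDerivAt (fun z : ℂ => z - ζ) 1 ζ := (hasDerivAt_id ζ).sub_const ζ
        have h2 : HasDerivAt g (deriv g ζ) ζ := hgan.differentiableAt.hasDerivAt
        have h3 := h1.mul h2
        simp only [pow_one, smul_eq_mul, one_mul, sub_self, zero_mul, add_zero] at h3 ⊢
        exact h3
      have hpd : deriv p ζ = g ζ := by
        rw [Filter.EventuallyEq.deriv_eq hev]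
        exact hgd.deriv
      rw [hp, deriv_sub_const, hd0] at hpd
      exact hgne hpd.symm
  -- setup
  set w₀ := F ζ with hw₀def
  set a : ℂ := (starRingEnd ℂ) w₀ * (-ζ)^n * g ζ with ha
  have hane : a ≠ 0 := by
    apply mul_ne_zero (mul_ne_zero _ _) hgne
    · simpa using hw₀ne
    · exact pow_ne_zero _ (neg_ne_zero.mpr hζne)
  obtain ⟨θ, hθabs, hθcos⟩ := exists_theta n hn2 (Complex.arg a)
    (Complex.neg_pi_lt_arg a) (Complex.arg_le_pi a)
  set e : ℂ := Complex.exp (↑θ * Complex.I) with he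
  have heabs : Complex.abs e = 1 := Complex.abs_exp_ofReal_mul_I θ
  have hcosθ : (1:ℝ)/2 ≤ Real.cos θ := by
    have h1 := Real.cos_le_cos_of_nonneg_of_le_pi (abs_nonneg θ)
      (by linarith [Real.pi_pos] : π/3 ≤ π) hθabs
    rw [Real.cos_pi_div_three] at h1
    rwa [Real.cos_abs] at h1
  set zf : ℝ → ℂ := fun ε => ζ * (1 - ↑ε * e) with hzf
  have hzsub : ∀ ε : ℝ, zf ε - ζ = -(ζ * e) * ↑ε := by intro ε; rw [hzf]; ring
  have hzdist : ∀ ε : ℝ, 0 ≤ ε → dist (zf ε) ζ = ε := by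
    intro ε hε
    rw [dist_eq_norm, hzsub ε, Complex.norm_eq_abs, map_mul, map_neg_eq_map, map_mul,
      hζabs, heabs, one_mul, one_mul, Complex.abs_ofReal, abs_of_nonneg hε]
  have hzmem : ∀ ε : ℝ, 0 < ε → ε < 1 → zf ε ∈ ball (0:ℂ) 1 := by
    intro ε hε hε1
    have hre : ((1:ℂ) - ↑ε * e).re = 1 - ε * Real.cos θ := by
      simp [he, Complex.re_ofReal_mul, Complex.exp_ofReal_mul_I_re]
    have him : ((1:ℂ) - ↑ε * e).im = -(ε * Real.sin θ) := by
      simp [he, Complex.im_ofReal_mul, Complex.exp_ofReal_mul_I_im]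
    have hns : Complex.normSq (zf ε) = 1 - 2*ε*Real.cos θ + ε^2 := by
      rw [hzf]
      simp only [Complex.normSq_mul]
      have h1 : Complex.normSq ζ = 1 := by
        rw [← Complex.sq_abs, hζabs]; norm_num
      rw [h1, one_mul, Complex.normSq_apply, hre, him]
      nlinarith [Real.sin_sq_add_cos_sq θ]
    rw [mem_ball_zero_iff, Complex.norm_eq_abs]
    nlinarith [Complex.sq_abs (zf ε), Complex.abs.nonneg (zf ε), hcosθ]
  obtain ⟨rg, hrg, hevb⟩ := Metric.eventually_nhds_iff_ball.mp hev
  set m : ℝ → ℂ := fun ε => (-(ζ * e))^n * g (zf ε) with hm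
  set r : ℝ → ℝ := fun ε => -2*(w₀ * (starRingEnd ℂ) (m ε)).re - ε^n * Complex.normSq (m ε)
    with hr
  have key : ∀ ε : ℝ, 0 < ε → ε < rg →
      1 - Complex.normSq (F (zf ε)) = ε^n * r ε := by
    intro ε hε hεrg
    have hball : zf ε ∈ ball ζ rg := by
      rw [mem_ball, hzdist ε hε.le]; exact hεrg
    have hpz := hevb _ hball
    rw [hp] at hpz
    have hFz : F (zf ε) = w₀ + ((ε^n : ℝ) : ℂ) * m ε := by
      have : (zf ε - ζ)^n • g (zf ε) = ((ε^n : ℝ) : ℂ) * m ε := by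
        rw [hzsub ε, mul_pow, smul_eq_mul, hm]
        push_cast
        ring
      rw [← this, ← hpz, hw₀def]
      ring
    rw [hFz, Complex.normSq_add]
    have h1 : Complex.normSq w₀ = 1 := by rw [← Complex.sq_abs, hw₀]; norm_num
    have h2 : Complex.normSq (((ε^n : ℝ) : ℂ) * m ε) = ε^n * (ε^n * Complex.normSq (m ε)) := by
      rw [Complex.normSq_mul, Complex.normSq_ofReal]
      ring
    have h3 : (w₀ * (starRingEnd ℂ) (((ε^n : ℝ) : ℂ) * m ε)).re
        = ε^n * (w₀ * (starRingEnd ℂ) (m ε)).re := by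
      rw [map_mul, Complex.conj_ofReal, ← mul_assoc, mul_comm w₀ (((ε^n : ℝ) : ℂ)), mul_assoc,
        Complex.re_ofReal_mul]
    rw [h1, h2, h3, hr]
    ring
  -- limit of r
  have hm0 : Tendsto m (nhds 0) (nhds ((-(ζ * e))^n * g ζ)) := by
    apply Tendsto.const_mul
    have hzf0 : Tendsto zf (nhds 0) (nhds ζ) := by
      have hc : Continuous zf := by
        rw [hzf]; continuity
      have := hc.tendsto 0
      simpa [hzf] using this
    exact (hgan.continuousAt.tendsto).comp hzf0
  set m₀ : ℂ := (-(ζ * e))^n * g ζ with hm₀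
  have hrt : Tendsto r (nhds 0) (nhds (-2*(w₀ * (starRingEnd ℂ) m₀).re)) := by
    rw [hr]
    have h1 : Tendsto (fun ε : ℝ => (w₀ * (starRingEnd ℂ) (m ε)).re) (nhds 0)
        (nhds ((w₀ * (starRingEnd ℂ) m₀).re)) :=
      (Complex.continuous_re.tendsto _).comp
        ((continuous_const.mul (Complex.continuous_conj)).tendsto _ |>.comp hm0)
    have h2 : Tendsto (fun ε : ℝ => ε^n * Complex.normSq (m ε)) (nhds 0) (nhds 0) := by
      have h3 : Tendsto (fun ε : ℝ => ε^n) (nhds 0) (nhds 0) := by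
        have := (continuous_pow n (M := ℝ)).tendsto 0
        simpa [zero_pow (by omega : n ≠ 0)] using this
      have h4 : Tendsto (fun ε : ℝ => Complex.normSq (m ε)) (nhds 0)
          (nhds (Complex.normSq m₀)) := (Complex.continuous_normSq.tendsto _).comp hm0
      simpa using h3.mul h4
    have := ((h1.const_mul (-2:ℝ)).sub h2)
    simpa using this
  -- the limit is negative
  have hre : (w₀ * (starRingEnd ℂ) m₀).re = (a * Complex.exp (↑((n:ℝ)*θ) * Complex.I)).re := by
    have hc : (w₀ * (starRingEnd ℂ) m₀).re = ((starRingEnd ℂ) w₀ * m₀).re := by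
      have h0 := Complex.conj_re ((starRingEnd ℂ) w₀ * m₀)
      have h1 : (starRingEnd ℂ) ((starRingEnd ℂ) w₀ * m₀) = w₀ * (starRingEnd ℂ) m₀ := by
        rw [map_mul, Complex.conj_conj]
      rw [h1] at h0
      exact h0
    rw [hc]
    have hen : e^n = Complex.exp (↑((n:ℝ)*θ) * Complex.I) := by
      rw [he, ← Complex.exp_nat_mul]
      congr 1
      push_cast
      ring
    have hmul : (-(ζ * e))^n = (-ζ)^n * e^n := by
      rw [← mul_pow]
      congr 1
      ring
    rw [hm₀, hmul, hen, ha]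
    congr 1
    ring
  have hrineq : Complex.abs a * (1/2) ≤ (w₀ * (starRingEnd ℂ) m₀).re := by
    rw [hre, re_mul_exp]
    apply mul_le_mul_of_nonneg_left _ (Complex.abs.nonneg a)
    exact hθcos
  have hL : -2*(w₀ * (starRingEnd ℂ) m₀).re < 0 := by
    have := Complex.abs.pos hane
    nlinarith
  have hev2 : ∀ᶠ ε in nhdsWithin (0:ℝ) (Set.Ioi 0), r ε < 0 :=
    ((hrt.mono_left nhdsWithin_le_nhds).eventually_lt_const hL)
  have hev3 : Set.Ioo (0:ℝ) (min rg 1) ∈ nhdsWithin (0:ℝ) (Set.Ioi 0) :=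
    Ioo_mem_nhdsGT_of_mem ⟨le_refl 0, by positivity⟩
  obtain ⟨ε, hε1, hε2⟩ := (hev2.and (Filter.eventually_of_mem hev3 (fun x hx => hx))).exists
  obtain ⟨hεpos, hεlt⟩ := hε2
  have hεrg : ε < rg := lt_of_lt_of_le hεlt (min_le_left _ _)
  have hε1' : ε < 1 := lt_of_lt_of_le hεlt (min_le_right _ _)
  have hk := key ε hεpos hεrg
  have hpos : 0 < 1 - Complex.normSq (F (zf ε)) := by
    have := hFlt _ (hzmem ε hεpos hε1')
    have h5 := Complex.sq_abs (F (zf ε))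
    nlinarith [Complex.abs.nonneg (F (zf ε))]
  have hneg : ε^n * r ε < 0 :=
    mul_neg_of_pos_of_neg (by positivity) hε1
  linarith

lemma aux_final (f F : ℂ → ℂ) (U : Set ℂ) (ζ : ℂ)
    (hU : IsOpen U) (hζU : ζ ∈ U)
    (hF : DifferentiableOn ℂ F U) (hfF : EqOn F f (ball 0 1))
    (hFan : AnalyticOnNhd ℂ F U)
    (hw₀ : Complex.abs (F ζ) = 1)
    (hζabs : Complex.abs ζ = 1) (hζne : ζ ≠ 0)
    (r₀ : ℝ) (hr₀pos : 0 < r₀) (hr₀U : ball ζ r₀ ⊆ U)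
    (hr₀good : ∀ z ∈ ball ζ r₀, z ≠ 0 ∧ ((starRingEnd ℂ) z)⁻¹ ∈ U)
    (hstar : ∀ z ∈ ball ζ r₀ ∩ ball (0:ℂ) 1,
      1 - Complex.abs (F z) ^ 2
        = Complex.abs (F z) * Complex.abs (F (((starRingEnd ℂ) z)⁻¹) - F z))
    (hzstar : ∀ z : ℂ, z ∈ ball (0:ℂ) 1 → z ≠ 0 →
      1 - Complex.abs z ^ 2
        = Complex.abs z * Complex.abs (((starRingEnd ℂ) z)⁻¹ - z))
    (hd0 : deriv F ζ ≠ 0)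
    (hFlt : ∀ z ∈ ball (0:ℂ) 1, Complex.abs (F z) < 1) :
    Tendsto (fun z => (1 - Complex.abs z ^ 2) *
          (Complex.abs (deriv f z) / (1 - Complex.abs (f z) ^ 2)))
        (nhdsWithin ζ (ball (0:ℂ) 1)) (nhds 1) := by
  have hτζ : ((starRingEnd ℂ) ζ)⁻¹ = ζ := by
    apply inv_eq_of_mul_eq_one_left
    rw [Complex.mul_conj]
    norm_cast
    rw [← Complex.sq_abs, hζabs]; norm_num
  have hτcont : ContinuousAt (fun z : ℂ => ((starRingEnd ℂ) z)⁻¹) ζ := by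
    apply ContinuousAt.inv₀ (Complex.continuous_conj.continuousAt)
    simpa using hζne
  have hDc : ContinuousAt (deriv F) ζ := ((hFan.deriv ζ hζU)).continuousAt
  -- Tendsto of the difference quotient
  have hQ : Tendsto (fun z : ℂ =>
        (F (((starRingEnd ℂ) z)⁻¹) - F z) / (((starRingEnd ℂ) z)⁻¹ - z))
      (nhdsWithin ζ (ball (0:ℂ) 1)) (nhds (deriv F ζ)) := by
    rw [Metric.tendsto_nhdsWithin_nhds]
    intro ε hε
    obtain ⟨δ₁, hδ₁pos, hδ₁⟩ := Metric.continuousAt_iff.mp hDc (ε/2) (by positivity)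
    set δ₁' := min δ₁ r₀ with hδ₁'
    have hδ₁'pos : 0 < δ₁' := lt_min hδ₁pos hr₀pos
    obtain ⟨δ₂, hδ₂pos, hδ₂⟩ := Metric.continuousAt_iff.mp hτcont δ₁' hδ₁'pos
    rw [hτζ] at hδ₂
    refine ⟨min δ₁' δ₂, lt_min hδ₁'pos hδ₂pos, ?_⟩
    intro z hzb hzd
    have hzδ₁ : z ∈ ball ζ δ₁' := by
      rw [mem_ball]; exact lt_of_lt_of_le hzd (min_le_left _ _)
    have hτδ₁ : ((starRingEnd ℂ) z)⁻¹ ∈ ball ζ δ₁' := by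
      rw [mem_ball]
      exact hδ₂ (lt_of_lt_of_le hzd (min_le_right _ _))
    have hzr₀ : z ∈ ball ζ r₀ := by
      rw [mem_ball]; exact lt_of_lt_of_le (mem_ball.mp hzδ₁) (min_le_right _ _)
    obtain ⟨hzne0, _⟩ := hr₀good z hzr₀
    have hzlt : Complex.abs z < 1 := by
      rw [mem_ball_zero_iff, Complex.norm_eq_abs] at hzb; exact hzb
    have hτabs : Complex.abs (((starRingEnd ℂ) z)⁻¹) = (Complex.abs z)⁻¹ := by
      rw [map_inv₀, Complex.abs_conj]
    have hτne : ((starRingEnd ℂ) z)⁻¹ - z ≠ 0 := by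
      intro h
      have h1 : ((starRingEnd ℂ) z)⁻¹ = z := by linear_combination h
      have := congrArg Complex.abs h1
      rw [hτabs] at this
      have habs0 : 0 < Complex.abs z := by
        simpa [Complex.abs.pos_iff] using hzne0
      have h2 : Complex.abs z * Complex.abs z = 1 := by
        nth_rewrite 2 [← this]
        exact mul_inv_cancel₀ habs0.ne'
      nlinarith [habs0, hzlt]
    -- mean value estimate on the convex ball
    set φ : ℂ → ℂ := fun u => F u - deriv F ζ * u with hφ
    have hmv : ‖φ (((starRingEnd ℂ) z)⁻¹) - φ z‖
        ≤ (ε/2) * ‖((starRingEnd ℂ) z)⁻¹ - z‖ := by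
      apply Convex.norm_image_sub_le_of_norm_hasDerivWithin_le
        (f' := fun u => deriv F u - deriv F ζ) (s := ball ζ δ₁')
        _ _ (convex_ball ζ δ₁') hzδ₁ hτδ₁
      · intro u hu
        have hder : HasDerivAt F (deriv F u) u :=
          (hF.differentiableAt (hU.mem_nhds (hr₀U (ball_subset_ball (min_le_right δ₁ r₀) hu)))).hasDerivAt
        have h2 : HasDerivAt (fun u : ℂ => deriv F ζ * u) (deriv F ζ) u := by
          simpa using (hasDerivAt_id u).const_mul (deriv F ζ)
        exact (hder.sub h2).hasDerivWithinAt
      · intro u hu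
        have : dist (deriv F u) (deriv F ζ) < ε/2 :=
          hδ₁ (lt_of_lt_of_le (mem_ball.mp hu) (min_le_left _ _))
        rw [dist_eq_norm] at this
        exact this.le
    have hforms : (F (((starRingEnd ℂ) z)⁻¹) - F z) / (((starRingEnd ℂ) z)⁻¹ - z) - deriv F ζ
        = (φ (((starRingEnd ℂ) z)⁻¹) - φ z) / (((starRingEnd ℂ) z)⁻¹ - z) := by
      have h1 : φ (((starRingEnd ℂ) z)⁻¹) - φ z
          = (F (((starRingEnd ℂ) z)⁻¹) - F z) - deriv F ζ * ((((starRingEnd ℂ) z)⁻¹) - z) := by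
        rw [hφ]; ring
      rw [h1]
      conv_rhs => rw [sub_div, mul_div_assoc, div_self hτne, mul_one]
    rw [dist_eq_norm, hforms, norm_div]
    have hpos : 0 < ‖((starRingEnd ℂ) z)⁻¹ - z‖ := by
      rw [norm_pos_iff]; exact hτne
    calc ‖φ (((starRingEnd ℂ) z)⁻¹) - φ z‖ / ‖((starRingEnd ℂ) z)⁻¹ - z‖
        ≤ ε/2 := by rw [div_le_iff₀ hpos]; exact hmv
      _ < ε := by linarith
  -- assembly
  have hd : 0 < Complex.abs (deriv F ζ) := Complex.abs.pos hd0
  have T1 : Tendsto (fun z : ℂ => Complex.abs z) (nhdsWithin ζ (ball (0:ℂ) 1)) (nhds 1) := by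
    have := (Complex.continuous_abs.tendsto ζ).mono_left
      (nhdsWithin_le_nhds (s := ball (0:ℂ) 1))
    rwa [hζabs] at this
  have T2 : Tendsto (fun z : ℂ => Complex.abs (deriv F z)) (nhdsWithin ζ (ball (0:ℂ) 1))
      (nhds (Complex.abs (deriv F ζ))) :=
    ((Complex.continuous_abs.tendsto _).comp hDc.tendsto).mono_left nhdsWithin_le_nhds
  have hFc : ContinuousAt F ζ := (hF.differentiableAt (hU.mem_nhds hζU)).continuousAt
  have T3 : Tendsto (fun z : ℂ => Complex.abs (F z)) (nhdsWithin ζ (ball (0:ℂ) 1)) (nhds 1) := by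
    have := ((Complex.continuous_abs.tendsto _).comp hFc.tendsto).mono_left
      (nhdsWithin_le_nhds (s := ball (0:ℂ) 1))
    rw [hw₀] at this
    exact this
  have T4 : Tendsto (fun z : ℂ => Complex.abs
      ((F (((starRingEnd ℂ) z)⁻¹) - F z) / ((((starRingEnd ℂ) z)⁻¹) - z)))
      (nhdsWithin ζ (ball (0:ℂ) 1)) (nhds (Complex.abs (deriv F ζ))) :=
    (Complex.continuous_abs.tendsto _).comp hQ
  have Tmain : Tendsto (fun z : ℂ => (Complex.abs z * Complex.abs (deriv F z)) /
      (Complex.abs (F z) * Complex.abs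
        ((F (((starRingEnd ℂ) z)⁻¹) - F z) / ((((starRingEnd ℂ) z)⁻¹) - z))))
      (nhdsWithin ζ (ball (0:ℂ) 1))
      (nhds ((1 * Complex.abs (deriv F ζ)) / (1 * Complex.abs (deriv F ζ)))) :=
    (T1.mul T2).div (T3.mul T4) (by simp [hd.ne'])
  rw [one_mul, div_self hd.ne'] at Tmain
  apply Tmain.congr'
  have hmem1 : ∀ᶠ z in nhdsWithin ζ (ball (0:ℂ) 1), z ∈ ball ζ r₀ :=
    Filter.eventually_iff_exists_mem.mpr
      ⟨ball ζ r₀, nhdsWithin_le_nhds (ball_mem_nhds ζ hr₀pos), fun z hz => hz⟩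
  have hmem2 : ∀ᶠ z in nhdsWithin ζ (ball (0:ℂ) 1), z ∈ ball (0:ℂ) 1 :=
    eventually_mem_nhdsWithin
  filter_upwards [hmem1, hmem2] with z hz1 hz2
  obtain ⟨hzne0, -⟩ := hr₀good z hz1
  have hfz : f z = F z := (hfF hz2).symm
  have hderiv : deriv f z = deriv F z := by
    have hev : f =ᶠ[nhds z] F :=
      Filter.eventually_iff_exists_mem.mpr
        ⟨ball (0:ℂ) 1, isOpen_ball.mem_nhds hz2, fun w hw => (hfF hw).symm⟩
    exact hev.deriv_eq
  have h1 := hzstar z hz2 hzne0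
  have h2 := hstar z ⟨hz1, hz2⟩
  have hzlt : Complex.abs z < 1 := by
    rw [mem_ball_zero_iff, Complex.norm_eq_abs] at hz2; exact hz2
  have hFlt' : Complex.abs (F z) < 1 := hFlt z hz2
  have hp1 : 0 < 1 - Complex.abs z ^ 2 := by nlinarith [Complex.abs.nonneg z]
  have hp2 : 0 < 1 - Complex.abs (F z) ^ 2 := by nlinarith [Complex.abs.nonneg (F z)]
  have hX : 0 < Complex.abs ((((starRingEnd ℂ) z)⁻¹) - z) := by
    nlinarith [Complex.abs.nonneg z, Complex.abs.nonneg ((((starRingEnd ℂ) z)⁻¹) - z)]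
  have habsF : 0 < Complex.abs (F z) := by
    nlinarith [Complex.abs.nonneg (F z), Complex.abs.nonneg (F (((starRingEnd ℂ) z)⁻¹) - F z)]
  have hY : 0 < Complex.abs (F (((starRingEnd ℂ) z)⁻¹) - F z) := by
    nlinarith [Complex.abs.nonneg (F z), Complex.abs.nonneg (F (((starRingEnd ℂ) z)⁻¹) - F z)]
  have hQabs : Complex.abs ((F (((starRingEnd ℂ) z)⁻¹) - F z) / ((((starRingEnd ℂ) z)⁻¹) - z))
      = Complex.abs (F (((starRingEnd ℂ) z)⁻¹) - F z)
        / Complex.abs ((((starRingEnd ℂ) z)⁻¹) - z) := map_div₀ _ _ _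
  rw [hfz, hderiv, hQabs, h1, h2]
  field_simp

theorem stmt_7 (f F : ℂ → ℂ) (I U : Set ℂ)
    (hI : I ⊆ sphere (0:ℂ) 1)
    (hIopen : ∃ V : Set ℂ, IsOpen V ∧ I = V ∩ sphere (0:ℂ) 1)
    (hU : IsOpen U) (hsub : ball (0:ℂ) 1 ∪ I ⊆ U)
    (hF : DifferentiableOn ℂ F U) (hfF : EqOn F f (ball 0 1))
    (hmod : ∀ ζ ∈ I, ‖F ζ‖ = 1)
    (hmap : MapsTo f (ball 0 1) (ball 0 1)) :
    ∀ ζ ∈ I,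
      Tendsto (fun z => (1 - ‖z‖ ^ 2) *
          (‖deriv f z‖ / (1 - ‖f z‖ ^ 2)))
        (nhdsWithin ζ (ball (0:ℂ) 1)) (nhds 1) := by
  obtain ⟨V, hVopen, hIV⟩ := hIopen
  intro ζ hζ
  have hζU : ζ ∈ U := hsub (Or.inr hζ)
  have hζabs : Complex.abs ζ = 1 := by
    have := hI hζ; simpa [Complex.abs_def] using this
  have hζne : ζ ≠ 0 := by
    intro h; rw [h] at hζabs; simp at hζabs
  have hFan : AnalyticOnNhd ℂ F U := hF.analyticOnNhd hU
  have hw₀ : Complex.abs (F ζ) = 1 := hmod ζ hζ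
  have hw₀ne : F ζ ≠ 0 := by
    intro h; rw [h] at hw₀; simp at hw₀
  have hFlt : ∀ z ∈ ball (0:ℂ) 1, Complex.abs (F z) < 1 := by
    intro z hz
    rw [hfF hz]
    have := hmap hz
    simpa [Complex.abs_def] using this
  obtain ⟨r₀, hr₀pos, hr₀U, hr₀good⟩ := aux_r0 F U ζ hU hζU hζabs hζne
  have hid := aux_hid F I U V ζ hU hζU hVopen hIV hI hζ hF hFan hmod hζabs hζne
    r₀ hr₀pos hr₀U hr₀good
  have hstar := aux_hstar F ζ r₀ hFlt hid
  have hd0 := aux_hd0 F U ζ hU hζU hFan hw₀ hw₀ne hζabs hζne hFlt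
  exact aux_final f F U ζ hU hζU hF hfF hFan hw₀ hζabs hζne r₀ hr₀pos hr₀U hr₀good
    hstar aux_hzstar hd0 hFlt
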